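/- The coefficient of x^n in J_P(x, 1) = Σ_{a ∈ PB} x^{ι(a)} is equal to 1, and the coefficient of y^n in J_P(1, y) = Σ_{a ∈ PB} y^{ε(a)} is equal to 1; equivalently, there is exactly one basis a ∈ PB with ι(a) = n and exactly one basis a ∈ PB with ε(a) = n. -/

import Mathlib

open Finset

variable {n : ℕ}

/-- The set of bases of the integer polymatroid with rank function `f` on ground set `Fin n`:
integer vectors `a` with `a i ≥ 0`, `∑_{i ∈ I} a i ≤ f I` for every `I`, and `∑ i, a i = f [n]`.
(The upper bound `a i ≤ f {i}` used for the ambient finite set is implied by the constraints.) -/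
noncomputable def PB (n : ℕ) (f : Finset (Fin n) → ℕ) : Finset (Fin n → ℤ) :=
  (Fintype.piFinset fun i : Fin n => Finset.Icc (0 : ℤ) (f {i})).filter fun a =>
    (∀ I : Finset (Fin n), ∑ j ∈ I, a j ≤ (f I : ℤ)) ∧ ∑ j, a j = (f Finset.univ : ℤ)

/-- A set `I` is tight for `a` if `∑_{i ∈ I} a i = f I`. -/
def Tight (f : Finset (Fin n) → ℕ) (a : Fin n → ℤ) (I : Finset (Fin n)) : Prop :=
  ∑ i ∈ I, a i = (f I : ℤ)

/-- `i` is internally active with respect to `a`: `a - e_i + e_j ∉ PB` for every `j < i`. -/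
def IntAct (f : Finset (Fin n) → ℕ) (a : Fin n → ℤ) (i : Fin n) : Prop :=
  ∀ j : Fin n, j < i → a - Pi.single i 1 + Pi.single j 1 ∉ PB n f

/-- `i` is externally active with respect to `a`: `a + e_i - e_j ∉ PB` for every `j < i`. -/
def ExtAct (f : Finset (Fin n) → ℕ) (a : Fin n → ℤ) (i : Fin n) : Prop :=
  ∀ j : Fin n, j < i → a + Pi.single i 1 - Pi.single j 1 ∉ PB n f

open scoped Classical in
/-- `Int(a)`: the set of internally active indices. -/
noncomputable def IntSet (f : Finset (Fin n) → ℕ) (a : Fin n → ℤ) : Finset (Fin n) :=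
  Finset.univ.filter fun i => IntAct f a i

open scoped Classical in
/-- `Ext(a)`: the set of externally active indices. -/
noncomputable def ExtSet (f : Finset (Fin n) → ℕ) (a : Fin n → ℤ) : Finset (Fin n) :=
  Finset.univ.filter fun i => ExtAct f a i

/-- `ι(a) = |Int(a)|`, the internal activity. -/
noncomputable def iota (f : Finset (Fin n) → ℕ) (a : Fin n → ℤ) : ℕ := (IntSet f a).card

/-- `ε(a) = |Ext(a)|`, the external activity. -/
noncomputable def eps (f : Finset (Fin n) → ℕ) (a : Fin n → ℤ) : ℕ := (ExtSet f a).card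

lemma mem_PB_iff {f : Finset (Fin n) → ℕ} {a : Fin n → ℤ} :
    a ∈ PB n f ↔ (∀ i, 0 ≤ a i) ∧ (∀ I : Finset (Fin n), ∑ j ∈ I, a j ≤ (f I : ℤ)) ∧
      ∑ j, a j = (f Finset.univ : ℤ) := by
  unfold PB
  simp only [Finset.mem_filter, Fintype.mem_piFinset, Finset.mem_Icc]
  constructor
  · rintro ⟨h1, h2, h3⟩; exact ⟨fun i => (h1 i).1, h2, h3⟩
  · rintro ⟨h1, h2, h3⟩
    refine ⟨fun i => ⟨h1 i, ?_⟩, h2, h3⟩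
    simpa using h2 {i}

lemma sum_move (a : Fin n → ℤ) (i k : Fin n) (I : Finset (Fin n)) :
    ∑ j ∈ I, ((a - Pi.single i 1 + Pi.single k 1 : Fin n → ℤ)) j
      = ∑ j ∈ I, a j - (if i ∈ I then 1 else 0) + (if k ∈ I then 1 else 0) := by
  simp only [Pi.add_apply, Pi.sub_apply, Finset.sum_add_distrib, Finset.sum_sub_distrib,
    Pi.single_apply, Finset.sum_ite_eq', Finset.sum_boole]
  

lemma move_mem {f : Finset (Fin n) → ℕ} {a : Fin n → ℤ} (ha : a ∈ PB n f) {i k : Fin n}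
    (hik : i ≠ k) (hai : 1 ≤ a i)
    (hk : ∀ I : Finset (Fin n), k ∈ I → i ∉ I → ∑ j ∈ I, a j < (f I : ℤ)) :
    a - Pi.single i 1 + Pi.single k 1 ∈ PB n f := by
  rw [mem_PB_iff] at ha ⊢
  obtain ⟨h0, hub, htot⟩ := ha
  refine ⟨?_, ?_, ?_⟩
  · intro j
    rcases eq_or_ne j i with rfl | hji
    · simp [Pi.single_apply, hik.symm, Ne.symm hik]
      omega
    · rcases eq_or_ne j k with rfl | hjk
      · simp [Pi.single_apply, hji]
        linarith [h0 j]
      · simp [Pi.single_apply, hji, hjk]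
        exact h0 j
  · intro I
    rw [sum_move]
    by_cases hiI : i ∈ I <;> by_cases hkI : k ∈ I <;> simp [hiI, hkI]
    · linarith [hub I]
    · linarith [hub I]
    · linarith [hk I hkI hiI]
    · exact hub I
  · rw [sum_move]
    simp [htot]

lemma tight_union_inter {f : Finset (Fin n) → ℕ}
    (hsub : ∀ I J : Finset (Fin n), f (I ∪ J) + f (I ∩ J) ≤ f I + f J) {a : Fin n → ℤ}
    (hub : ∀ I : Finset (Fin n), ∑ j ∈ I, a j ≤ (f I : ℤ)) {I J : Finset (Fin n)}
    (hI : Tight f a I) (hJ : Tight f a J) :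
    Tight f a (I ∪ J) ∧ Tight f a (I ∩ J) := by
  have key : ∑ j ∈ I ∪ J, a j + ∑ j ∈ I ∩ J, a j = ∑ j ∈ I, a j + ∑ j ∈ J, a j :=
    Finset.sum_union_inter
  have h1 := hub (I ∪ J); have h2 := hub (I ∩ J)
  have h3 : (f (I ∪ J) : ℤ) + (f (I ∩ J) : ℤ) ≤ (f I : ℤ) + (f J : ℤ) := by
    exact_mod_cast hsub I J
  unfold Tight at *
  constructor <;> linarith

lemma tight_inf {f : Finset (Fin n) → ℕ}
    (hsub : ∀ I J : Finset (Fin n), f (I ∪ J) + f (I ∩ J) ≤ f I + f J) {a : Fin n → ℤ}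
    (hub : ∀ I : Finset (Fin n), ∑ j ∈ I, a j ≤ (f I : ℤ))
    (htot : ∑ j, a j = (f Finset.univ : ℤ))
    (S : Finset (Finset (Fin n))) (hS : ∀ I ∈ S, Tight f a I) :
    Tight f a (S.inf id) := by
  classical
  induction S using Finset.induction_on with
  | empty => simpa [Finset.inf_empty, Finset.top_eq_univ, Tight] using htot
  | @insert I S' hx ih =>
    rw [Finset.inf_insert, id, Finset.inf_eq_inter]
    exact (tight_union_inter hsub hub (hS I (by simp))
      (ih fun J hJ => hS J (by simp [hJ]))).2

def Pre (n m : ℕ) : Finset (Fin n) := Finset.univ.filter (fun j => (j : ℕ) < m)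

lemma mem_Pre {m : ℕ} {j : Fin n} : j ∈ Pre n m ↔ (j : ℕ) < m := by simp [Pre]

lemma Pre_zero : Pre n 0 = ∅ := by ext j; simp [mem_Pre]

lemma Pre_n : Pre n n = Finset.univ := by ext j; simp [mem_Pre, j.isLt]

lemma Pre_succ {m : ℕ} (hm : m < n) : Pre n (m + 1) = insert ⟨m, hm⟩ (Pre n m) := by
  ext j
  simp only [mem_Pre, Finset.mem_insert, Fin.ext_iff]
  omega

lemma Pre_mono {m m' : ℕ} (h : m ≤ m') : Pre n m ⊆ Pre n m' :=
  fun j hj => mem_Pre.2 (lt_of_lt_of_le (mem_Pre.1 hj) h)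

def Suf (n m : ℕ) : Finset (Fin n) := Finset.univ.filter (fun j => m ≤ (j : ℕ))

lemma mem_Suf {m : ℕ} {j : Fin n} : j ∈ Suf n m ↔ m ≤ (j : ℕ) := by simp [Suf]

lemma Suf_zero : Suf n 0 = Finset.univ := by ext j; simp [mem_Suf]

lemma Suf_n : Suf n n = ∅ := by ext j; simp [mem_Suf]

lemma Suf_succ {m : ℕ} (hm : m < n) : Suf n m = insert ⟨m, hm⟩ (Suf n (m + 1)) := by
  ext j
  simp only [mem_Suf, Finset.mem_insert, Fin.ext_iff]
  omega

lemma Suf_anti {m m' : ℕ} (h : m ≤ m') : Suf n m' ⊆ Suf n m :=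
  fun j hj => mem_Suf.2 (le_trans h (mem_Suf.1 hj))

noncomputable def gInt (n : ℕ) (f : Finset (Fin n) → ℕ) : Fin n → ℤ :=
  fun k => (f (Pre n ((k : ℕ) + 1)) : ℤ) - f (Pre n (k : ℕ))

noncomputable def gExt (n : ℕ) (f : Finset (Fin n) → ℕ) : Fin n → ℤ :=
  fun k => (f (Suf n (k : ℕ)) : ℤ) - f (Suf n ((k : ℕ) + 1))

section main

variable {f : Finset (Fin n) → ℕ}

lemma gInt_prefix_sum (hf0 : f ∅ = 0) :
    ∀ m, m ≤ n → ∑ j ∈ Pre n m, gInt n f j = (f (Pre n m) : ℤ) := by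
  intro m
  induction m with
  | zero => intro _; simp [Pre_zero, hf0]
  | succ m ih =>
    intro hm1
    have hm : m < n := hm1
    have hnot : (⟨m, hm⟩ : Fin n) ∉ Pre n m := by simp [mem_Pre]
    rw [Pre_succ hm, Finset.sum_insert hnot, ih (le_of_lt hm), ← Pre_succ hm]
    show (f (Pre n (m + 1)) : ℤ) - f (Pre n m) + f (Pre n m) = f (Pre n (m + 1))
    ring

lemma gExt_suffix_sum (hf0 : f ∅ = 0) :
    ∀ m, m ≤ n → ∑ j ∈ Suf n m, gExt n f j = (f (Suf n m) : ℤ) := by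
  have key : ∀ d, d ≤ n → ∑ j ∈ Suf n (n - d), gExt n f j = (f (Suf n (n - d)) : ℤ) := by
    intro d
    induction d with
    | zero => intro _; simp [Suf_n, hf0]
    | succ d ih =>
      intro hd1
      have hm : n - (d + 1) < n := by omega
      have hstep : n - (d + 1) + 1 = n - d := by omega
      have hnot : (⟨n - (d + 1), hm⟩ : Fin n) ∉ Suf n (n - (d + 1) + 1) := by
        simp [mem_Suf]
      have hins : insert (⟨n - (d + 1), hm⟩ : Fin n) (Suf n (n - d)) = Suf n (n - (d + 1)) := by
        rw [← hstep, ← Suf_succ hm]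
      rw [Suf_succ hm, Finset.sum_insert hnot, hstep, ih (by omega), hins]
      show (f (Suf n (n - (d + 1))) : ℤ) - f (Suf n (n - (d + 1) + 1)) + f (Suf n (n - d))
          = f (Suf n (n - (d + 1)))
      rw [hstep]; ring
  intro m hm
  have := key (n - m) (by omega)
  rwa [Nat.sub_sub_self hm] at this

lemma gInt_sum_le (hf0 : f ∅ = 0)
    (hsub : ∀ I J : Finset (Fin n), f (I ∪ J) + f (I ∩ J) ≤ f I + f J)
    (I : Finset (Fin n)) : ∑ j ∈ I, gInt n f j ≤ (f I : ℤ) := by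
  have step : ∀ j ∈ I,
      gInt n f j ≤ (f (I ∩ Pre n ((j : ℕ) + 1)) : ℤ) - f (I ∩ Pre n (j : ℕ)) := by
    intro j hj
    have hU : (I ∩ Pre n ((j : ℕ) + 1)) ∪ Pre n (j : ℕ) = Pre n ((j : ℕ) + 1) := by
      ext x
      simp only [Finset.mem_union, Finset.mem_inter, mem_Pre]
      constructor
      · rintro (⟨_, h⟩ | h) <;> omega
      · intro h
        by_cases hx : (x : ℕ) < (j : ℕ)
        · exact Or.inr hx
        · have : x = j := Fin.ext (by omega)
          exact Or.inl ⟨this ▸ hj, h⟩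
    have hI : (I ∩ Pre n ((j : ℕ) + 1)) ∩ Pre n (j : ℕ) = I ∩ Pre n (j : ℕ) := by
      ext x
      simp only [Finset.mem_inter, mem_Pre]
      constructor
      · rintro ⟨⟨h1, _⟩, h3⟩; exact ⟨h1, h3⟩
      · rintro ⟨h1, h2⟩; exact ⟨⟨h1, by omega⟩, h2⟩
    have h3 := hsub (I ∩ Pre n ((j : ℕ) + 1)) (Pre n (j : ℕ))
    rw [hU, hI] at h3
    have h3' : (f (Pre n ((j : ℕ) + 1)) : ℤ) + f (I ∩ Pre n (j : ℕ))
        ≤ f (I ∩ Pre n ((j : ℕ) + 1)) + f (Pre n (j : ℕ)) := by exact_mod_cast h3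
    show (f (Pre n ((j : ℕ) + 1)) : ℤ) - f (Pre n (j : ℕ)) ≤ _
    linarith
  calc ∑ j ∈ I, gInt n f j
      ≤ ∑ j ∈ I, ((f (I ∩ Pre n ((j : ℕ) + 1)) : ℤ) - f (I ∩ Pre n (j : ℕ))) :=
        Finset.sum_le_sum step
    _ = ∑ j : Fin n, ((f (I ∩ Pre n ((j : ℕ) + 1)) : ℤ) - f (I ∩ Pre n (j : ℕ))) := by
        apply Finset.sum_subset (Finset.subset_univ I)
        intro x _ hx
        have : I ∩ Pre n ((x : ℕ) + 1) = I ∩ Pre n (x : ℕ) := by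
          ext y
          simp only [Finset.mem_inter, mem_Pre]
          constructor
          · rintro ⟨hy, h⟩
            refine ⟨hy, ?_⟩
            rcases Nat.lt_succ_iff_lt_or_eq.1 h with h' | h'
            · exact h'
            · exact absurd (Fin.ext h' ▸ hy) hx
          · rintro ⟨hy, h⟩; exact ⟨hy, by omega⟩
        rw [this]; ring
    _ = ∑ m ∈ Finset.range n, ((f (I ∩ Pre n (m + 1)) : ℤ) - f (I ∩ Pre n m)) := by
        exact Fin.sum_univ_eq_sum_range
          (fun m => ((f (I ∩ Pre n (m + 1)) : ℤ) - (f (I ∩ Pre n m) : ℤ))) n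
    _ = (f (I ∩ Pre n n) : ℤ) - f (I ∩ Pre n 0) :=
        Finset.sum_range_sub (fun m => (f (I ∩ Pre n m) : ℤ)) n
    _ ≤ (f I : ℤ) := by
        rw [Pre_n, Pre_zero, Finset.inter_univ, Finset.inter_empty, hf0]
        simp

lemma gExt_sum_le (hf0 : f ∅ = 0)
    (hsub : ∀ I J : Finset (Fin n), f (I ∪ J) + f (I ∩ J) ≤ f I + f J)
    (I : Finset (Fin n)) : ∑ j ∈ I, gExt n f j ≤ (f I : ℤ) := by
  have step : ∀ j ∈ I,
      gExt n f j ≤ (f (I ∩ Suf n (j : ℕ)) : ℤ) - f (I ∩ Suf n ((j : ℕ) + 1)) := by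
    intro j hj
    have hU : (I ∩ Suf n (j : ℕ)) ∪ Suf n ((j : ℕ) + 1) = Suf n (j : ℕ) := by
      ext x
      simp only [Finset.mem_union, Finset.mem_inter, mem_Suf]
      constructor
      · rintro (⟨_, h⟩ | h) <;> omega
      · intro h
        by_cases hx : (j : ℕ) + 1 ≤ (x : ℕ)
        · exact Or.inr hx
        · have : x = j := Fin.ext (by omega)
          exact Or.inl ⟨this ▸ hj, h⟩
    have hI : (I ∩ Suf n (j : ℕ)) ∩ Suf n ((j : ℕ) + 1) = I ∩ Suf n ((j : ℕ) + 1) := by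
      ext x
      simp only [Finset.mem_inter, mem_Suf]
      constructor
      · rintro ⟨⟨h1, _⟩, h3⟩; exact ⟨h1, h3⟩
      · rintro ⟨h1, h2⟩; exact ⟨⟨h1, by omega⟩, h2⟩
    have h3 := hsub (I ∩ Suf n (j : ℕ)) (Suf n ((j : ℕ) + 1))
    rw [hU, hI] at h3
    have h3' : (f (Suf n (j : ℕ)) : ℤ) + f (I ∩ Suf n ((j : ℕ) + 1))
        ≤ f (I ∩ Suf n (j : ℕ)) + f (Suf n ((j : ℕ) + 1)) := by exact_mod_cast h3
    show (f (Suf n (j : ℕ)) : ℤ) - f (Suf n ((j : ℕ) + 1)) ≤ _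
    linarith
  calc ∑ j ∈ I, gExt n f j
      ≤ ∑ j ∈ I, ((f (I ∩ Suf n (j : ℕ)) : ℤ) - f (I ∩ Suf n ((j : ℕ) + 1))) :=
        Finset.sum_le_sum step
    _ = ∑ j : Fin n, ((f (I ∩ Suf n (j : ℕ)) : ℤ) - f (I ∩ Suf n ((j : ℕ) + 1))) := by
        apply Finset.sum_subset (Finset.subset_univ I)
        intro x _ hx
        have : I ∩ Suf n (x : ℕ) = I ∩ Suf n ((x : ℕ) + 1) := by
          ext y
          simp only [Finset.mem_inter, mem_Suf]
          constructor
          · rintro ⟨hy, h⟩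
            refine ⟨hy, ?_⟩
            rcases Nat.lt_or_ge (x : ℕ) (y : ℕ) with h' | h'
            · omega
            · have : (y : ℕ) = (x : ℕ) := by omega
              exact absurd (Fin.ext this ▸ hy) hx
          · rintro ⟨hy, h⟩; exact ⟨hy, by omega⟩
        rw [this]; ring
    _ = ∑ m ∈ Finset.range n, ((f (I ∩ Suf n m) : ℤ) - f (I ∩ Suf n (m + 1))) := by
        exact Fin.sum_univ_eq_sum_range
          (fun m => ((f (I ∩ Suf n m) : ℤ) - (f (I ∩ Suf n (m + 1)) : ℤ))) n
    _ = (f (I ∩ Suf n 0) : ℤ) - f (I ∩ Suf n n) :=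
        Finset.sum_range_sub' (fun m => (f (I ∩ Suf n m) : ℤ)) n
    _ ≤ (f I : ℤ) := by
        rw [Suf_zero, Suf_n, Finset.inter_univ, Finset.inter_empty, hf0]
        simp

end main

lemma sum_move' (a : Fin n → ℤ) (i k : Fin n) (I : Finset (Fin n)) :
    ∑ j ∈ I, ((a + Pi.single i 1 - Pi.single k 1 : Fin n → ℤ)) j
      = ∑ j ∈ I, a j + (if i ∈ I then 1 else 0) - (if k ∈ I then 1 else 0) := by
  simp only [Pi.add_apply, Pi.sub_apply, Finset.sum_add_distrib, Finset.sum_sub_distrib,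
    Pi.single_apply, Finset.sum_ite_eq', Finset.sum_boole]

lemma mem_inf_id {S : Finset (Finset (Fin n))} {x : Fin n} :
    x ∈ S.inf id ↔ ∀ I ∈ S, x ∈ I := by
  classical
  induction S using Finset.induction_on with
  | empty => simp [Finset.top_eq_univ]
  | @insert I S' hx ih =>
    simp [Finset.inf_insert, Finset.inf_eq_inter, Finset.mem_inter, ih]

section main2

variable {f : Finset (Fin n) → ℕ}

lemma gInt_mem (hf0 : f ∅ = 0) (hmono : ∀ I J : Finset (Fin n), I ⊆ J → f I ≤ f J)
    (hsub : ∀ I J : Finset (Fin n), f (I ∪ J) + f (I ∩ J) ≤ f I + f J) :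
    gInt n f ∈ PB n f := by
  rw [mem_PB_iff]
  refine ⟨?_, gInt_sum_le hf0 hsub, ?_⟩
  · intro k
    have := hmono (Pre n (k : ℕ)) (Pre n ((k : ℕ) + 1)) (Pre_mono (Nat.le_succ _))
    simp only [gInt, sub_nonneg]
    exact_mod_cast this
  · have := gInt_prefix_sum hf0 n le_rfl
    rwa [Pre_n] at this

lemma gExt_mem (hf0 : f ∅ = 0) (hmono : ∀ I J : Finset (Fin n), I ⊆ J → f I ≤ f J)
    (hsub : ∀ I J : Finset (Fin n), f (I ∪ J) + f (I ∩ J) ≤ f I + f J) :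
    gExt n f ∈ PB n f := by
  rw [mem_PB_iff]
  refine ⟨?_, gExt_sum_le hf0 hsub, ?_⟩
  · intro k
    have := hmono (Suf n ((k : ℕ) + 1)) (Suf n (k : ℕ)) (Suf_anti (Nat.le_succ _))
    simp only [gExt, sub_nonneg]
    exact_mod_cast this
  · have := gExt_suffix_sum hf0 0 (Nat.zero_le n)
    rwa [Suf_zero] at this

lemma gInt_active (hf0 : f ∅ = 0) (i : Fin n) : IntAct f (gInt n f) i := by
  intro j hj hb
  rw [mem_PB_iff] at hb
  have hub := hb.2.1 (Pre n (i : ℕ))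
  rw [sum_move] at hub
  have hiI : i ∉ Pre n (i : ℕ) := by simp [mem_Pre]
  have hjI : j ∈ Pre n (i : ℕ) := mem_Pre.2 (Fin.lt_def.1 hj)
  rw [gInt_prefix_sum hf0 (i : ℕ) (le_of_lt i.isLt)] at hub
  simp only [hiI, hjI, if_true, if_false, if_neg hiI, if_pos hjI] at hub
  linarith

lemma gExt_active (hf0 : f ∅ = 0) (i : Fin n) : ExtAct f (gExt n f) i := by
  intro j hj hb
  rw [mem_PB_iff] at hb
  have hub := hb.2.1 (Suf n ((j : ℕ) + 1))
  rw [sum_move'] at hub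
  have hiI : i ∈ Suf n ((j : ℕ) + 1) := mem_Suf.2 (Fin.lt_def.1 hj)
  have hjI : j ∉ Suf n ((j : ℕ) + 1) := by simp [mem_Suf]
  rw [gExt_suffix_sum hf0 ((j : ℕ) + 1) j.isLt] at hub
  simp only [if_pos hiI, if_neg hjI] at hub
  linarith

lemma exchange_step (hsub : ∀ I J : Finset (Fin n), f (I ∪ J) + f (I ∩ J) ≤ f I + f J)
    {a : Fin n → ℤ} (ha : a ∈ PB n f) (k : Fin n) :
    ∃ T : Finset (Fin n), Tight f a T ∧ k ∈ T ∧
      (∀ i ∈ T, ∀ I : Finset (Fin n), Tight f a I → k ∈ I → i ∈ I) := by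
  classical
  obtain ⟨h0, hub, htot⟩ := mem_PB_iff.1 ha
  set S : Finset (Finset (Fin n)) :=
    Finset.univ.filter (fun I => Tight f a I ∧ k ∈ I) with hS
  refine ⟨S.inf id, ?_, ?_, ?_⟩
  · exact tight_inf hsub hub htot S (fun I hI => ((Finset.mem_filter.1 hI).2).1)
  · exact mem_inf_id.2 (fun I hI => ((Finset.mem_filter.1 hI).2).2)
  · intro i hi I hIt hkI
    exact mem_inf_id.1 hi I (Finset.mem_filter.2 ⟨Finset.mem_univ I, hIt, hkI⟩)

lemma int_tight_prefix (hf0 : f ∅ = 0)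
    (hmono : ∀ I J : Finset (Fin n), I ⊆ J → f I ≤ f J)
    (hsub : ∀ I J : Finset (Fin n), f (I ∪ J) + f (I ∩ J) ≤ f I + f J)
    {a : Fin n → ℤ} (ha : a ∈ PB n f) (hact : ∀ i, IntAct f a i) :
    ∀ m, m ≤ n → Tight f a (Pre n m) := by
  intro m
  induction m with
  | zero => intro _; simp [Tight, Pre_zero, hf0]
  | succ m ih =>
    intro hm1
    have hm : m < n := hm1
    have hPm := ih (le_of_lt hm)
    by_contra hne
    obtain ⟨h0, hub, htot⟩ := mem_PB_iff.1 ha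
    set km : Fin n := ⟨m, hm⟩ with hkm
    obtain ⟨T, hTt, hkT, hTmin⟩ := exchange_step hsub ha km
    have hex : ∃ i, i ∈ T ∧ m < (i : ℕ) ∧ 1 ≤ a i := by
      by_contra hno
      push_neg at hno
      have hU : Tight f a (T ∩ Pre n (m + 1)) := by
        have hsumU : ∑ j ∈ T ∩ Pre n (m + 1), a j = ∑ j ∈ T, a j := by
          apply Finset.sum_subset Finset.inter_subset_left
          intro x hxT hxU
          have hx : m < (x : ℕ) := by
            by_contra hxx
            exact hxU (Finset.mem_inter.2 ⟨hxT, mem_Pre.2 (show (x : ℕ) < m + 1 by omega)⟩)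
          have h1 := hno x hxT hx
          have h2 := h0 x
          omega
        have h1 := hub (T ∩ Pre n (m + 1))
        have h2 : (f (T ∩ Pre n (m + 1)) : ℤ) ≤ f T := by
          exact_mod_cast hmono _ _ Finset.inter_subset_left
        unfold Tight at hTt ⊢
        linarith
      have hunion : Pre n m ∪ (T ∩ Pre n (m + 1)) = Pre n (m + 1) := by
        apply Finset.Subset.antisymm
        · exact Finset.union_subset (Pre_mono (Nat.le_succ m)) Finset.inter_subset_right
        · rw [Pre_succ hm]
          exact Finset.insert_subset
            (Finset.mem_union_right _ (Finset.mem_inter.2 ⟨hkT, Finset.mem_insert_self _ _⟩))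
            Finset.subset_union_left
      have hfin := (tight_union_inter hsub hub hPm hU).1
      rw [hunion] at hfin
      exact hne hfin
    obtain ⟨i, hiT, him, hai⟩ := hex
    have hik : i ≠ km := by
      intro h
      rw [h] at him
      simp [hkm] at him
    have hk' : ∀ I : Finset (Fin n), km ∈ I → i ∉ I → ∑ j ∈ I, a j < (f I : ℤ) := by
      intro I hkI hiI
      exact lt_of_le_of_ne (hub I) (fun hT => hiI (hTmin i hiT I hT hkI))
    exact hact i km (Fin.lt_def.2 (by simpa [hkm] using him)) (move_mem ha hik hai hk')

lemma ext_tight_suffix (hf0 : f ∅ = 0)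
    (hmono : ∀ I J : Finset (Fin n), I ⊆ J → f I ≤ f J)
    (hsub : ∀ I J : Finset (Fin n), f (I ∪ J) + f (I ∩ J) ≤ f I + f J)
    {a : Fin n → ℤ} (ha : a ∈ PB n f) (hact : ∀ i, ExtAct f a i) :
    ∀ m, m ≤ n → Tight f a (Suf n m) := by
  have key : ∀ d, d ≤ n → Tight f a (Suf n (n - d)) := by
    intro d
    induction d with
    | zero => intro _; simp [Tight, Suf_n, hf0]
    | succ d ih =>
      intro hd1
      have hm : n - (d + 1) < n := by omega
      have hstep : n - (d + 1) + 1 = n - d := by omega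
      have hSm := ih (by omega)
      rw [← hstep] at hSm
      by_contra hne
      obtain ⟨h0, hub, htot⟩ := mem_PB_iff.1 ha
      set km : Fin n := ⟨n - (d + 1), hm⟩ with hkm
      obtain ⟨T, hTt, hkT, hTmin⟩ := exchange_step hsub ha km
      have hex : ∃ j, j ∈ T ∧ (j : ℕ) < n - (d + 1) ∧ 1 ≤ a j := by
        by_contra hno
        push_neg at hno
        have hU : Tight f a (T ∩ Suf n (n - (d + 1))) := by
          have hsumU : ∑ j ∈ T ∩ Suf n (n - (d + 1)), a j = ∑ j ∈ T, a j := by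
            apply Finset.sum_subset Finset.inter_subset_left
            intro x hxT hxU
            have hx : (x : ℕ) < n - (d + 1) := by
              by_contra hxx
              exact hxU (Finset.mem_inter.2 ⟨hxT, mem_Suf.2 (show n - (d + 1) ≤ (x : ℕ) by omega)⟩)
            have h1 := hno x hxT hx
            have h2 := h0 x
            omega
          have h1 := hub (T ∩ Suf n (n - (d + 1)))
          have h2 : (f (T ∩ Suf n (n - (d + 1))) : ℤ) ≤ f T := by
            exact_mod_cast hmono _ _ Finset.inter_subset_left
          unfold Tight at hTt ⊢
          linarith
        have hunion : Suf n (n - (d + 1) + 1) ∪ (T ∩ Suf n (n - (d + 1)))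
            = Suf n (n - (d + 1)) := by
          apply Finset.Subset.antisymm
          · exact Finset.union_subset (Suf_anti (Nat.le_succ _)) Finset.inter_subset_right
          · rw [Suf_succ hm]
            exact Finset.insert_subset
              (Finset.mem_union_right _ (Finset.mem_inter.2 ⟨hkT, Finset.mem_insert_self _ _⟩))
              Finset.subset_union_left
        have hfin := (tight_union_inter hsub hub hSm hU).1
        rw [hunion] at hfin
        exact hne hfin
      obtain ⟨j, hjT, hjm, haj⟩ := hex
      have hjk : j ≠ km := by
        intro h
        rw [h] at hjm
        simp [hkm] at hjm
      have hk' : ∀ I : Finset (Fin n), km ∈ I → j ∉ I → ∑ x ∈ I, a x < (f I : ℤ) := by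
        intro I hkI hjI
        exact lt_of_le_of_ne (hub I) (fun hT => hjI (hTmin j hjT I hT hkI))
      have hmove := move_mem ha hjk haj hk'
      rw [sub_add_eq_add_sub] at hmove
      exact hact km j (Fin.lt_def.2 (by simpa [hkm] using hjm)) hmove
  intro m hm
  have := key (n - m) (by omega)
  rwa [Nat.sub_sub_self hm] at this

lemma int_unique (hf0 : f ∅ = 0)
    (hmono : ∀ I J : Finset (Fin n), I ⊆ J → f I ≤ f J)
    (hsub : ∀ I J : Finset (Fin n), f (I ∪ J) + f (I ∩ J) ≤ f I + f J)
    {a : Fin n → ℤ} (ha : a ∈ PB n f) (hact : ∀ i, IntAct f a i) :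
    a = gInt n f := by
  funext k
  have h1 := int_tight_prefix hf0 hmono hsub ha hact ((k : ℕ) + 1) k.isLt
  have h2 := int_tight_prefix hf0 hmono hsub ha hact (k : ℕ) (le_of_lt k.isLt)
  unfold Tight at h1 h2
  rw [Pre_succ k.isLt, Finset.sum_insert (by simp [mem_Pre]), ← Pre_succ k.isLt] at h1
  have heta : (⟨(k : ℕ), k.isLt⟩ : Fin n) = k := rfl
  rw [heta, h2] at h1
  simp only [gInt]
  linarith

lemma ext_unique (hf0 : f ∅ = 0)
    (hmono : ∀ I J : Finset (Fin n), I ⊆ J → f I ≤ f J)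
    (hsub : ∀ I J : Finset (Fin n), f (I ∪ J) + f (I ∩ J) ≤ f I + f J)
    {a : Fin n → ℤ} (ha : a ∈ PB n f) (hact : ∀ i, ExtAct f a i) :
    a = gExt n f := by
  funext k
  have h1 := ext_tight_suffix hf0 hmono hsub ha hact (k : ℕ) (le_of_lt k.isLt)
  have h2 := ext_tight_suffix hf0 hmono hsub ha hact ((k : ℕ) + 1) k.isLt
  unfold Tight at h1 h2
  rw [Suf_succ k.isLt, Finset.sum_insert (by simp [mem_Suf]), ← Suf_succ k.isLt] at h1
  have heta : (⟨(k : ℕ), k.isLt⟩ : Fin n) = k := rfl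
  rw [heta, h2] at h1
  simp only [gExt]
  linarith

lemma iota_eq_iff {a : Fin n → ℤ} : iota f a = n ↔ ∀ i, IntAct f a i := by
  classical
  unfold iota
  constructor
  · intro h i
    have hu : IntSet f a = Finset.univ :=
      Finset.eq_univ_of_card _ (by rw [h, Fintype.card_fin])
    have := Finset.eq_univ_iff_forall.1 hu i
    simpa [IntSet] using this
  · intro h
    have hu : IntSet f a = Finset.univ :=
      Finset.eq_univ_iff_forall.2 (fun i => by simp [IntSet, h i])
    rw [hu, Finset.card_univ, Fintype.card_fin]

lemma eps_eq_iff {a : Fin n → ℤ} : eps f a = n ↔ ∀ i, ExtAct f a i := by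
  classical
  unfold eps
  constructor
  · intro h i
    have hu : ExtSet f a = Finset.univ :=
      Finset.eq_univ_of_card _ (by rw [h, Fintype.card_fin])
    have := Finset.eq_univ_iff_forall.1 hu i
    simpa [ExtSet] using this
  · intro h
    have hu : ExtSet f a = Finset.univ :=
      Finset.eq_univ_iff_forall.2 (fun i => by simp [ExtSet, h i])
    rw [hu, Finset.card_univ, Fintype.card_fin]

end main2

open scoped Classical in
/-- There is exactly one basis of internal activity `n` and exactly one basis of
external activity `n`; equivalently the coefficients of `x^n` in `J_P(x,1)` and of
`y^n` in `J_P(1,y)` are both `1`. -/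
theorem coeff_top
    (n : ℕ) (hn : 0 < n) (f : Finset (Fin n) → ℕ)
    (hf0 : f ∅ = 0)
    (hmono : ∀ I J : Finset (Fin n), I ⊆ J → f I ≤ f J)
    (hsub : ∀ I J : Finset (Fin n), f (I ∪ J) + f (I ∩ J) ≤ f I + f J) :
    ((PB n f).filter fun a => iota f a = n).card = 1 ∧
    ((PB n f).filter fun a => eps f a = n).card = 1 := by
  constructor
  · have hset : (PB n f).filter (fun a => iota f a = n) = {gInt n f} := by
      apply Finset.eq_singleton_iff_unique_mem.2
      refine ⟨Finset.mem_filter.2 ⟨gInt_mem hf0 hmono hsub,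
        iota_eq_iff.2 (gInt_active hf0)⟩, ?_⟩
      intro b hb
      obtain ⟨hbPB, hbn⟩ := Finset.mem_filter.1 hb
      exact int_unique hf0 hmono hsub hbPB (iota_eq_iff.1 hbn)
    rw [hset, Finset.card_singleton]
  · have hset : (PB n f).filter (fun a => eps f a = n) = {gExt n f} := by
      apply Finset.eq_singleton_iff_unique_mem.2
      refine ⟨Finset.mem_filter.2 ⟨gExt_mem hf0 hmono hsub,
        eps_eq_iff.2 (gExt_active hf0)⟩, ?_⟩
      intro b hb
      obtain ⟨hbPB, hbn⟩ := Finset.mem_filter.1 hb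
      exact ext_unique hf0 hmono hsub hbPB (eps_eq_iff.1 hbn)
    rw [hset, Finset.card_singleton]
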